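/- Each systole {i, (a_1,...,a_{m-3})} corresponds to a cyclic sequence of exactly 4 realised squares, and two distinct systoles share at most one realised square. -/
import Mathlib


/-- Systoles: pairs `{i, a}` with `i ∈ ZMod m`, `a ∈ (ZMod 2)^(m-3)`. -/
def Systole (m : ℕ) : Type := ZMod m × (Fin (m - 3) → ZMod 2)

/-- A realised square of the `m`-cube: varying coordinates `{i, i+1}`. -/
def IsRealisedSquare (m : ℕ) (S : Set (ZMod m → ZMod 2)) : Prop :=
  ∃ (i : ZMod m) (f : ZMod m → ZMod 2),
    S = {v | ∀ k, k ≠ i → k ≠ i + 1 → v k = f k}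

/-- The realised square with varying coordinates `{i, i+1}` through which the
systole `{i, a}` passes: coordinates `i+2+j` are fixed to `a j` and coordinate
`i-1` is fixed to `ε`. -/
def sqPlus (m : ℕ) (i : ZMod m) (a : Fin (m - 3) → ZMod 2) (ε : ZMod 2) :
    Set (ZMod m → ZMod 2) :=
  {v | (∀ j : Fin (m - 3), v (i + 2 + (j : ℕ)) = a j) ∧ v (i - 1) = ε}

/-- The realised square with varying coordinates `{i-1, i}` through which the
systole `{i, a}` passes: coordinates `i+2+j` are fixed to `a j` and coordinate
`i+1` is fixed to `ε`. -/
def sqMinus (m : ℕ) (i : ZMod m) (a : Fin (m - 3) → ZMod 2) (ε : ZMod 2) :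
    Set (ZMod m → ZMod 2) :=
  {v | (∀ j : Fin (m - 3), v (i + 2 + (j : ℕ)) = a j) ∧ v (i + 1) = ε}

/-- The (cyclic sequence of) realised squares of the systole `{i, a}`. -/
def systoleSquares (m : ℕ) (s : Systole m) : Set (Set (ZMod m → ZMod 2)) :=
  {S | ∃ ε : ZMod 2, S = sqPlus m s.1 s.2 ε ∨ S = sqMinus m s.1 s.2 ε}

namespace SystoleAux

variable {m : ℕ}

/-- The standard form of a realised square. -/
def Std (m : ℕ) (i : ZMod m) (f : ZMod m → ZMod 2) : Set (ZMod m → ZMod 2) :=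
  {v | ∀ k, k ≠ i → k ≠ i + 1 → v k = f k}

lemma castInj (hm : 5 ≤ m) {c d : ℕ} (hc : c < m) (hd : d < m)
    (h : (c : ZMod m) = (d : ZMod m)) : c = d := by
  haveI : NeZero m := ⟨by omega⟩
  have h1 := ZMod.val_cast_of_lt (n := m) hc
  have h2 := ZMod.val_cast_of_lt (n := m) hd
  rw [h] at h1; omega

lemma shiftInj (hm : 5 ≤ m) (i : ZMod m) {c d : ℕ} (hc : c < m) (hd : d < m)
    (h : i + (c : ZMod m) = i + (d : ZMod m)) : c = d :=
  castInj hm hc hd (add_left_cancel h)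

lemma shiftNe (hm : 5 ≤ m) (i : ZMod m) {c d : ℕ} (hc : c < m) (hd : d < m)
    (h : c ≠ d) : i + (c : ZMod m) ≠ i + (d : ZMod m) :=
  fun h' => h (shiftInj hm i hc hd h')

lemma natCast_sub_eq (hm : 5 ≤ m) {c : ℕ} (hc : c ≤ m) :
    ((m - c : ℕ) : ZMod m) = -(c : ZMod m) := by
  rw [Nat.cast_sub hc, ZMod.natCast_self, zero_sub]

lemma pt_pred (hm : 5 ≤ m) (i : ZMod m) : i - 1 = i + (((m - 1 : ℕ)) : ZMod m) := by
  rw [natCast_sub_eq hm (by omega)]; push_cast; ring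

lemma pt_pred2 (hm : 5 ≤ m) (i : ZMod m) : i - 2 = i + (((m - 2 : ℕ)) : ZMod m) := by
  rw [natCast_sub_eq hm (by omega)]; push_cast; ring

lemma pt_succ (i : ZMod m) : i + 1 = i + (((1 : ℕ)) : ZMod m) := by push_cast; ring

lemma pt_self (i : ZMod m) : i = i + (((0 : ℕ)) : ZMod m) := by push_cast; ring

lemma pt_j (i : ZMod m) (j : ℕ) : i + 2 + ((j : ℕ) : ZMod m) = i + (((2 + j : ℕ)) : ZMod m) := by
  push_cast; ring

lemma dval (hm : 5 ≤ m) (i : ZMod m) {c : ℕ} (hc : c < m) :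
    ((i + (c : ZMod m)) - i).val = c := by
  haveI : NeZero m := ⟨by omega⟩
  rw [add_sub_cancel_left, ZMod.val_cast_of_lt hc]

/-- fixing function for sqPlus. -/
def Fx (m : ℕ) (i : ZMod m) (a : Fin (m - 3) → ZMod 2) (ε : ZMod 2) : ZMod m → ZMod 2 :=
  fun k => if h : (k - i).val - 2 < m - 3 then a ⟨(k - i).val - 2, h⟩ else ε

/-- fixing function for sqMinus (standard base point `i - 1`). -/
def Gx (m : ℕ) (i : ZMod m) (a : Fin (m - 3) → ZMod 2) (ε : ZMod 2) : ZMod m → ZMod 2 :=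
  fun k => if (k - i).val = 1 then ε
    else if h : (k - i).val - 2 < m - 3 then a ⟨(k - i).val - 2, h⟩ else 0

lemma Fx_eval_j (hm : 5 ≤ m) (i : ZMod m) (a : Fin (m - 3) → ZMod 2) (ε : ZMod 2)
    (j : Fin (m - 3)) : Fx m i a ε (i + 2 + (j : ℕ)) = a j := by
  have hj := j.isLt
  rw [pt_j]
  unfold Fx
  rw [dval hm i (by omega)]
  rw [dif_pos (by omega)]
  congr 1
  apply Fin.ext
  show 2 + (j : ℕ) - 2 = (j : ℕ)
  omega

lemma Fx_eval_pred (hm : 5 ≤ m) (i : ZMod m) (a : Fin (m - 3) → ZMod 2) (ε : ZMod 2) :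
    Fx m i a ε (i - 1) = ε := by
  rw [pt_pred hm]
  unfold Fx
  rw [dval hm i (by omega)]
  rw [dif_neg (by omega)]

lemma Gx_eval_j (hm : 5 ≤ m) (i : ZMod m) (a : Fin (m - 3) → ZMod 2) (ε : ZMod 2)
    (j : Fin (m - 3)) : Gx m i a ε (i + 2 + (j : ℕ)) = a j := by
  have hj := j.isLt
  rw [pt_j]
  unfold Gx
  rw [dval hm i (by omega)]
  rw [if_neg (by omega), dif_pos (by omega)]
  congr 1
  apply Fin.ext
  show 2 + (j : ℕ) - 2 = (j : ℕ)
  omega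

lemma Gx_eval_succ (hm : 5 ≤ m) (i : ZMod m) (a : Fin (m - 3) → ZMod 2) (ε : ZMod 2) :
    Gx m i a ε (i + 1) = ε := by
  rw [pt_succ]
  unfold Gx
  rw [dval hm i (by omega), if_pos rfl]

lemma Gx_eval_pred2 (hm : 5 ≤ m) (i : ZMod m) (a : Fin (m - 3) → ZMod 2) (ε : ZMod 2) :
    Gx m i a ε (i - 2) = a ⟨m - 4, by omega⟩ := by
  rw [pt_pred2 hm]
  unfold Gx
  rw [dval hm i (by omega), if_neg (by omega), dif_pos (by omega)]
  exact congrArg a (Fin.ext (by show m - 2 - 2 = m - 4; omega))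

/-- decomposition of the fixed coordinates -/
lemma decomp (hm : 5 ≤ m) {i k : ZMod m} (h0 : k ≠ i) (h1 : k ≠ i + 1) :
    k = i - 1 ∨ ∃ j : Fin (m - 3), k = i + 2 + ((j : ℕ) : ZMod m) := by
  haveI : NeZero m := ⟨by omega⟩
  have key : ∃ d : ℕ, d < m ∧ d ≠ 0 ∧ d ≠ 1 ∧ k = i + (d : ZMod m) := by
    refine ⟨(k - i).val, ZMod.val_lt _, ?_, ?_, ?_⟩
    · intro h
      apply h0
      have : k - i = 0 := by
        have := ZMod.natCast_val (R := ZMod m) (k - i)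
        rw [ZMod.cast_id] at this
        rw [← this, h]; simp
      have := sub_eq_zero.mp this; exact this
    · intro h
      apply h1
      have h2 : k - i = 1 := by
        have := ZMod.natCast_val (R := ZMod m) (k - i)
        rw [ZMod.cast_id] at this
        rw [← this, h]; simp
      have : k = i + (k - i) := by ring
      rw [this, h2]
    · have := ZMod.natCast_val (R := ZMod m) (k - i)
      rw [ZMod.cast_id] at this
      rw [this]; ring
  obtain ⟨d, hdm, hd0, hd1, hk⟩ := key
  by_cases hdl : d = m - 1
  · left; rw [hk, hdl, pt_pred hm]
  · right
    refine ⟨⟨d - 2, by omega⟩, ?_⟩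
    rw [hk, pt_j]
    congr 2
    show d = 2 + (d - 2)
    omega

lemma sqPlus_eq_Std (hm : 5 ≤ m) (i : ZMod m) (a : Fin (m - 3) → ZMod 2) (ε : ZMod 2) :
    sqPlus m i a ε = Std m i (Fx m i a ε) := by
  ext v
  constructor
  · rintro ⟨hA, hB⟩ k hk0 hk1
    rcases decomp hm hk0 hk1 with rfl | ⟨j, rfl⟩
    · rw [Fx_eval_pred hm, hB]
    · rw [Fx_eval_j hm, hA]
  · intro h
    constructor
    · intro j
      have hj := j.isLt
      rw [h _ (by rw [pt_j]; conv_rhs => rw [pt_self i]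
                  exact shiftNe hm i (by omega) (by omega) (by omega))
            (by rw [pt_j, pt_succ i]; exact shiftNe hm i (by omega) (by omega) (by omega)),
        Fx_eval_j hm]
    · rw [h _ (by rw [pt_pred hm]; conv_rhs => rw [pt_self i]
                  exact shiftNe hm i (by omega) (by omega) (by omega))
            (by rw [pt_pred hm, pt_succ i]; exact shiftNe hm i (by omega) (by omega) (by omega)),
        Fx_eval_pred hm]

lemma pt_m4 (hm : 5 ≤ m) (i : ZMod m) :
    i + 2 + (((m - 4 : ℕ)) : ZMod m) = i - 2 := by
  rw [natCast_sub_eq hm (by omega)]; push_cast; ring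

lemma sqMinus_eq_Std (hm : 5 ≤ m) (i : ZMod m) (a : Fin (m - 3) → ZMod 2) (ε : ZMod 2) :
    sqMinus m i a ε = Std m (i - 1) (Gx m i a ε) := by
  have hbase : i - 1 + 1 = i := by ring
  ext v
  constructor
  · rintro ⟨hA, hB⟩ k hk0 hk1
    rw [hbase] at hk1
    rcases decomp hm (i := i - 1) hk0 (by rwa [hbase]) with rfl | ⟨j, hkj⟩
    · -- k = (i-1) - 1 = i - 2
      have e : i - 1 - 1 = i - 2 := by ring
      rw [e, Gx_eval_pred2 hm]
      have e2 : i - 2 = i + 2 + (((⟨m - 4, by omega⟩ : Fin (m - 3)) : ℕ) : ZMod m) := by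
        show i - 2 = i + 2 + (((m - 4 : ℕ)) : ZMod m)
        rw [pt_m4 hm]
      rw [e2, hA]
      
    · -- k = (i-1) + 2 + j = i + 1 + j
      have hj := j.isLt
      rcases Nat.eq_zero_or_pos (j : ℕ) with hz | hp
      · have : k = i + 1 := by rw [hkj, hz]; push_cast; ring
        rw [this, Gx_eval_succ hm, hB]
      · set j' : Fin (m - 3) := ⟨(j : ℕ) - 1, by omega⟩ with hj'
        have : k = i + 2 + ((j' : ℕ) : ZMod m) := by
          rw [hkj]
          show i - 1 + 2 + ((j : ℕ) : ZMod m) = i + 2 + (((j : ℕ) - 1 : ℕ) : ZMod m)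
          have : ((j : ℕ) : ZMod m) = (((j : ℕ) - 1 : ℕ) : ZMod m) + 1 := by
            rw [Nat.cast_sub (by omega : 1 ≤ (j : ℕ))]
            push_cast
            ring
          rw [this]; ring
        rw [this, Gx_eval_j hm, hA]
  · intro h
    constructor
    · intro j
      have hj := j.isLt
      rw [h _ (by rw [pt_j, pt_pred hm]; exact shiftNe hm i (by omega) (by omega) (by omega))
            (by rw [hbase, pt_j]; conv_rhs => rw [pt_self i]
                exact shiftNe hm i (by omega) (by omega) (by omega)),
        Gx_eval_j hm]
    · rw [h _ (by rw [pt_succ, pt_pred hm]; exact shiftNe hm i (by omega) (by omega) (by omega))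
            (by rw [hbase, pt_succ]; conv_rhs => rw [pt_self i]
                exact shiftNe hm i (by omega) (by omega) (by omega)),
        Gx_eval_succ hm]


lemma std_mem_self (i : ZMod m) (f : ZMod m → ZMod 2) : f ∈ Std m i f :=
  fun _ _ _ => rfl

lemma std_flip (i : ZMod m) (f : ZMod m → ZMod 2) (b : ZMod 2) :
    Function.update f i b ∈ Std m i f := by
  intro k hk _
  rw [Function.update_of_ne hk]

lemma std_flip' (i : ZMod m) (f : ZMod m → ZMod 2) (b : ZMod 2) :
    Function.update f (i + 1) b ∈ Std m i f := by
  intro k _ hk1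
  rw [Function.update_of_ne hk1]

lemma two_ne_zero' (hm : 5 ≤ m) : (2 : ZMod m) ≠ 0 := by
  have : ((2 : ℕ) : ZMod m) ≠ ((0 : ℕ) : ZMod m) :=
    fun h => by have := castInj hm (by omega) (by omega) h; omega
  simpa using this

lemma one_ne_zero' (hm : 5 ≤ m) : (1 : ZMod m) ≠ 0 := by
  have : ((1 : ℕ) : ZMod m) ≠ ((0 : ℕ) : ZMod m) :=
    fun h => by have := castInj hm (by omega) (by omega) h; omega
  simpa using this

lemma std_index (hm : 5 ≤ m) {i i' : ZMod m} {f f' : ZMod m → ZMod 2}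
    (h : Std m i f = Std m i' f') : i = i' ∨ i = i' + 1 := by
  by_contra hc
  push_neg at hc
  have h1 : f ∈ Std m i' f' := h ▸ std_mem_self i f
  have h2 : Function.update f i (f i + 1) ∈ Std m i' f' := h ▸ std_flip i f _
  have e1 := h1 i hc.1 hc.2
  have e2 := h2 i hc.1 hc.2
  rw [Function.update_self] at e2
  have h3 : f i + 1 = f i + 0 := by rw [add_zero]; exact e2.trans e1.symm
  exact one_ne_zero (add_left_cancel h3)

lemma std_index' (hm : 5 ≤ m) {i i' : ZMod m} {f f' : ZMod m → ZMod 2}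
    (h : Std m i f = Std m i' f') : i + 1 = i' ∨ i + 1 = i' + 1 := by
  by_contra hc
  push_neg at hc
  have h1 : f ∈ Std m i' f' := h ▸ std_mem_self i f
  have h2 : Function.update f (i + 1) (f (i + 1) + 1) ∈ Std m i' f' := h ▸ std_flip' i f _
  have e1 := h1 (i + 1) hc.1 hc.2
  have e2 := h2 (i + 1) hc.1 hc.2
  rw [Function.update_self] at e2
  have h3 : f (i + 1) + 1 = f (i + 1) + 0 := by rw [add_zero]; exact e2.trans e1.symm
  exact one_ne_zero (add_left_cancel h3)

lemma std_ext (hm : 5 ≤ m) {i i' : ZMod m} {f f' : ZMod m → ZMod 2}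
    (h : Std m i f = Std m i' f') :
    i = i' ∧ ∀ k, k ≠ i → k ≠ i + 1 → f k = f' k := by
  have hi : i = i' := by
    rcases std_index hm h with h1 | h1
    · exact h1
    rcases std_index' hm h with h2 | h2
    · exfalso
      apply two_ne_zero' hm
      have h3 : i + 0 = i + 2 := by
        rw [add_zero]
        calc i = i' + 1 := h1
        _ = (i + 1) + 1 := by rw [h2]
        _ = i + 2 := by ring
      exact (add_left_cancel h3).symm
    · exact add_right_cancel h2
  subst hi
  exact ⟨rfl, fun k hk hk1 => (h ▸ std_mem_self i f) k hk hk1⟩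

/-- Equality of two sqPlus squares. -/
lemma eqPP (hm : 5 ≤ m) {i i' : ZMod m} {a a' : Fin (m - 3) → ZMod 2} {ε ε' : ZMod 2}
    (h : sqPlus m i a ε = sqPlus m i' a' ε') : i = i' ∧ a = a' ∧ ε = ε' := by
  rw [sqPlus_eq_Std hm, sqPlus_eq_Std hm] at h
  obtain ⟨hi, hf⟩ := std_ext hm h
  subst hi
  refine ⟨rfl, funext fun j => ?_, ?_⟩
  · have hj := j.isLt
    have := hf (i + 2 + (j : ℕ))
      (by rw [pt_j]; conv_rhs => rw [pt_self i]
          exact shiftNe hm i (by omega) (by omega) (by omega))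
      (by rw [pt_j, pt_succ i]; exact shiftNe hm i (by omega) (by omega) (by omega))
    rwa [Fx_eval_j hm, Fx_eval_j hm] at this
  · have := hf (i - 1)
      (by rw [pt_pred hm]; conv_rhs => rw [pt_self i]
          exact shiftNe hm i (by omega) (by omega) (by omega))
      (by rw [pt_pred hm, pt_succ i]; exact shiftNe hm i (by omega) (by omega) (by omega))
    rwa [Fx_eval_pred hm, Fx_eval_pred hm] at this

/-- Equality of two sqMinus squares. -/
lemma eqMM (hm : 5 ≤ m) {i i' : ZMod m} {a a' : Fin (m - 3) → ZMod 2} {ε ε' : ZMod 2}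
    (h : sqMinus m i a ε = sqMinus m i' a' ε') : i = i' ∧ a = a' ∧ ε = ε' := by
  rw [sqMinus_eq_Std hm, sqMinus_eq_Std hm] at h
  obtain ⟨hi, hf⟩ := std_ext hm h
  have hi' : i = i' := by
    have h3 : i - 1 + 1 = i' - 1 + 1 := by rw [hi]
    simpa [sub_add_cancel] using h3
  subst hi'
  have hb : i - 1 + 1 = i := by ring
  refine ⟨rfl, funext fun j => ?_, ?_⟩
  · have hj := j.isLt
    have := hf (i + 2 + (j : ℕ))
      (by rw [pt_j, pt_pred hm]; exact shiftNe hm i (by omega) (by omega) (by omega))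
      (by rw [hb, pt_j]; conv_rhs => rw [pt_self i]
          exact shiftNe hm i (by omega) (by omega) (by omega))
    rwa [Gx_eval_j hm, Gx_eval_j hm] at this
  · have := hf (i + 1)
      (by rw [pt_succ, pt_pred hm]; exact shiftNe hm i (by omega) (by omega) (by omega))
      (by rw [hb, pt_succ]; conv_rhs => rw [pt_self i]
          exact shiftNe hm i (by omega) (by omega) (by omega))
    rwa [Gx_eval_succ hm, Gx_eval_succ hm] at this

/-- Equality of a sqPlus and a sqMinus square. -/
lemma eqPM (hm : 5 ≤ m) {i i' : ZMod m} {a a' : Fin (m - 3) → ZMod 2} {ε ε' : ZMod 2}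
    (h : sqPlus m i a ε = sqMinus m i' a' ε') :
    i' = i + 1 ∧ ε = a' ⟨m - 4, by omega⟩ := by
  rw [sqPlus_eq_Std hm, sqMinus_eq_Std hm] at h
  obtain ⟨hi, hf⟩ := std_ext hm h
  have hi' : i' = i + 1 := by
    have h3 : i + 1 = i' - 1 + 1 := by rw [hi]
    rw [sub_add_cancel] at h3
    exact h3.symm
  refine ⟨hi', ?_⟩
  have := hf (i - 1)
    (by rw [pt_pred hm]; conv_rhs => rw [pt_self i]
        exact shiftNe hm i (by omega) (by omega) (by omega))
    (by rw [pt_pred hm, pt_succ i]; exact shiftNe hm i (by omega) (by omega) (by omega))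
  rw [Fx_eval_pred hm] at this
  have e : i - 1 = i' - 2 := by rw [hi']; ring
  rw [e, Gx_eval_pred2 hm] at this
  exact this


lemma ne_PM (hm : 5 ≤ m) (i : ZMod m) (a a' : Fin (m - 3) → ZMod 2) (ε δ : ZMod 2) :
    sqPlus m i a ε ≠ sqMinus m i a' δ := by
  intro h
  have h1 := (eqPM hm h).1
  have h2 : i + 0 = i + 1 := by rw [add_zero]; exact h1
  exact one_ne_zero' hm (add_left_cancel h2).symm

lemma key (hm : 5 ≤ m) {i i' : ZMod m} {a a' : Fin (m - 3) → ZMod 2}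
    (hne : ¬(i = i' ∧ a = a')) {S1 S2 : Set (ZMod m → ZMod 2)}
    (h1s : ∃ ε, S1 = sqPlus m i a ε ∨ S1 = sqMinus m i a ε)
    (h1t : ∃ ε, S1 = sqPlus m i' a' ε ∨ S1 = sqMinus m i' a' ε)
    (h2s : ∃ ε, S2 = sqPlus m i a ε ∨ S2 = sqMinus m i a ε)
    (h2t : ∃ ε, S2 = sqPlus m i' a' ε ∨ S2 = sqMinus m i' a' ε) :
    S1 = S2 := by
  obtain ⟨ε1, h1s⟩ := h1s
  obtain ⟨δ1, h1t⟩ := h1t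
  obtain ⟨ε2, h2s⟩ := h2s
  obtain ⟨δ2, h2t⟩ := h2t
  have two0 : (2 : ZMod m) ≠ 0 := two_ne_zero' hm
  rcases h1s with h1s | h1s <;> rcases h1t with h1t | h1t
  · obtain ⟨hi, ha, -⟩ := eqPP hm (h1s.symm.trans h1t)
    exact absurd ⟨hi, ha⟩ hne
  · -- S1 : (P, M)
    obtain ⟨hi1, he1⟩ := eqPM hm (h1s.symm.trans h1t)
    rcases h2s with h2s | h2s <;> rcases h2t with h2t | h2t
    · obtain ⟨hi, ha, -⟩ := eqPP hm (h2s.symm.trans h2t)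
      exact absurd ⟨hi, ha⟩ hne
    · -- S2 : (P, M)
      obtain ⟨-, he2⟩ := eqPM hm (h2s.symm.trans h2t)
      rw [h1s, h2s, he1.trans he2.symm]
    · -- S2 : (M, P)
      obtain ⟨hi2, -⟩ := eqPM hm (h2t.symm.trans h2s)
      exfalso
      apply two0
      have h3 : i + 0 = i + 2 := by
        rw [add_zero]
        calc i = i' + 1 := hi2
        _ = (i + 1) + 1 := by rw [hi1]
        _ = i + 2 := by ring
      exact (add_left_cancel h3).symm
    · obtain ⟨hi, ha, -⟩ := eqMM hm (h2s.symm.trans h2t)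
      exact absurd ⟨hi, ha⟩ hne
  · -- S1 : (M, P)
    obtain ⟨hi1, he1⟩ := eqPM hm (h1t.symm.trans h1s)
    rcases h2s with h2s | h2s <;> rcases h2t with h2t | h2t
    · obtain ⟨hi, ha, -⟩ := eqPP hm (h2s.symm.trans h2t)
      exact absurd ⟨hi, ha⟩ hne
    · -- S2 : (P, M)
      obtain ⟨hi2, -⟩ := eqPM hm (h2s.symm.trans h2t)
      exfalso
      apply two0
      have h3 : i + 0 = i + 2 := by
        rw [add_zero]
        calc i = i' + 1 := hi1
        _ = (i + 1) + 1 := by rw [hi2]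
        _ = i + 2 := by ring
      exact (add_left_cancel h3).symm
    · -- S2 : (M, P)
      obtain ⟨-, he2⟩ := eqPM hm (h2t.symm.trans h2s)
      rw [h1t, h2t, he1.trans he2.symm]
    · obtain ⟨hi, ha, -⟩ := eqMM hm (h2s.symm.trans h2t)
      exact absurd ⟨hi, ha⟩ hne
  · obtain ⟨hi, ha, -⟩ := eqMM hm (h1s.symm.trans h1t)
    exact absurd ⟨hi, ha⟩ hne

end SystoleAux

open SystoleAux

/-- For `m ≥ 5`, each systole corresponds to exactly 4 realised squares, and
two distinct systoles share at most one realised square. -/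
theorem systole_four_squares (m : ℕ) (hm : 5 ≤ m) :
    (∀ s : Systole m,
      (systoleSquares m s).ncard = 4 ∧
      ∀ S ∈ systoleSquares m s, IsRealisedSquare m S) ∧
    (∀ s t : Systole m, s ≠ t →
      (systoleSquares m s ∩ systoleSquares m t).ncard ≤ 1) := by
  constructor
  · intro s
    constructor
    · have hset : systoleSquares m s =
          {sqPlus m s.1 s.2 0, sqPlus m s.1 s.2 1, sqMinus m s.1 s.2 0, sqMinus m s.1 s.2 1} := by
        ext S
        simp only [systoleSquares, Set.mem_setOf_eq, Set.mem_insert_iff, Set.mem_singleton_iff]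
        constructor
        · rintro ⟨ε, h | h⟩ <;>
            rcases (by decide : ∀ ε : ZMod 2, ε = 0 ∨ ε = 1) ε with rfl | rfl <;> tauto
        · rintro (h | h | h | h)
          exacts [⟨0, Or.inl h⟩, ⟨1, Or.inl h⟩, ⟨0, Or.inr h⟩, ⟨1, Or.inr h⟩]
      have hPP : sqPlus m s.1 s.2 0 ≠ sqPlus m s.1 s.2 1 := fun h => by
        have h2 := (eqPP hm h).2.2
        exact absurd h2 (by decide)
      have hMM : sqMinus m s.1 s.2 0 ≠ sqMinus m s.1 s.2 1 := fun h => by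
        have h2 := (eqMM hm h).2.2
        exact absurd h2 (by decide)
      have hPM : ∀ ε δ : ZMod 2, sqPlus m s.1 s.2 ε ≠ sqMinus m s.1 s.2 δ :=
        fun ε δ => ne_PM hm s.1 s.2 s.2 ε δ
      rw [hset]
      rw [Set.ncard_insert_of_notMem
            (by simp only [Set.mem_insert_iff, Set.mem_singleton_iff]
                push_neg
                exact ⟨hPP, hPM 0 0, hPM 0 1⟩)
            (((Set.finite_singleton _).insert _).insert _),
          Set.ncard_insert_of_notMem
            (by simp only [Set.mem_insert_iff, Set.mem_singleton_iff]
                push_neg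
                exact ⟨hPM 1 0, hPM 1 1⟩)
            ((Set.finite_singleton _).insert _),
          Set.ncard_insert_of_notMem
            (by simpa using hMM)
            (Set.finite_singleton _),
          Set.ncard_singleton]
    · rintro S ⟨ε, rfl | rfl⟩
      · exact ⟨s.1, Fx m s.1 s.2 ε, sqPlus_eq_Std hm _ _ _⟩
      · exact ⟨s.1 - 1, Gx m s.1 s.2 ε, sqMinus_eq_Std hm _ _ _⟩
  · intro s t hst
    by_cases hne : (systoleSquares m s ∩ systoleSquares m t).Nonempty
    · obtain ⟨S0, hS0⟩ := hne
      have hne' : ¬(s.1 = t.1 ∧ s.2 = t.2) := fun ⟨h1, h2⟩ => hst (Prod.ext h1 h2)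
      have hsub : systoleSquares m s ∩ systoleSquares m t ⊆ {S0} := by
        intro S1 hS1
        rw [Set.mem_singleton_iff]
        exact key hm hne' hS1.1 hS1.2 hS0.1 hS0.2
      calc (systoleSquares m s ∩ systoleSquares m t).ncard
          ≤ ({S0} : Set (Set (ZMod m → ZMod 2))).ncard :=
            Set.ncard_le_ncard hsub (Set.finite_singleton S0)
        _ = 1 := Set.ncard_singleton S0
    · rw [Set.not_nonempty_iff_eq_empty] at hne
      rw [hne, Set.ncard_empty]
      omega
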